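/- For every continuous linear functional f on H there exists a unique u⁰ ∈ ker B such that ⟨A u⁰, A v⟩_U = f(v) for all v ∈ ker B. -/

import Mathlib

open RealInnerProductSpace

/-- For every continuous linear functional f on H there exists a unique u⁰ ∈ ker B such
that ⟨A u⁰, A v⟩_U = f(v) for all v ∈ ker B. -/
theorem stmt_1
    {H U V : Type*}
    [NormedAddCommGroup H] [InnerProductSpace ℝ H] [CompleteSpace H]
    [NormedAddCommGroup U] [InnerProductSpace ℝ U] [CompleteSpace U]
    [NormedAddCommGroup V] [InnerProductSpace ℝ V] [CompleteSpace V]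
    (A : H →L[ℝ] U) (B : H →L[ℝ] V)
    (c₁ c₂ : ℝ) (hc₁ : 0 < c₁) (hc₂ : 0 < c₂)
    (hlow : ∀ v : H, c₁ * ‖v‖ ≤ ‖A v‖ + ‖B v‖)
    (hup : ∀ v : H, ‖A v‖ + ‖B v‖ ≤ c₂ * ‖v‖)
    (f : H →L[ℝ] ℝ) :
    ∃! u₀ : H, B u₀ = 0 ∧ ∀ v : H, B v = 0 → ⟪A u₀, A v⟫ = f v := by
  classical
  set W := LinearMap.ker (B : H →ₗ[ℝ] V)
  haveI : CompleteSpace W := (ContinuousLinearMap.isClosed_ker B).completeSpace_coe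
  -- lower bound on A restricted to ker B
  have hlowW : ∀ w : W, c₁ * ‖w‖ ≤ ‖A (w : H)‖ := by
    intro w
    have hw : B (w : H) = 0 := w.2
    have := hlow (w : H)
    rw [hw] at this
    simpa using this
  set T : W →L[ℝ] U := A.comp (Submodule.subtypeL W) with hT
  set M : W →L[ℝ] U →L[ℝ] ℝ := (innerSL ℝ).comp T with hM
  set b : W →L[ℝ] W →L[ℝ] ℝ := (M.flip.comp T).flip with hb
  have hbapp : ∀ u v : W, b u v = ⟪T u, T v⟫ := fun u v => rfl
  have coercive : IsCoercive b := by
    refine ⟨c₁ * c₁, mul_pos hc₁ hc₁, fun u => ?_⟩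
    have h1 : c₁ * ‖u‖ ≤ ‖T u‖ := hlowW u
    have h2 : b u u = ‖T u‖ ^ 2 := by
      rw [hbapp, real_inner_self_eq_norm_sq]
    rw [h2]
    calc c₁ * c₁ * ‖u‖ * ‖u‖ = (c₁ * ‖u‖) * (c₁ * ‖u‖) := by ring
      _ ≤ ‖T u‖ * ‖T u‖ := by
          apply mul_le_mul h1 h1 (by positivity) (norm_nonneg _)
      _ = ‖T u‖ ^ 2 := by ring
  set F : W →L[ℝ] ℝ := f.comp (Submodule.subtypeL W) with hF
  set w : W := (InnerProductSpace.toDual ℝ W).symm F with hw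
  have hwapp : ∀ v : W, ⟪w, v⟫ = F v := fun v =>
    InnerProductSpace.toDual_symm_apply
  set u : W := coercive.continuousLinearEquivOfBilin.symm w with hu
  have hbu : ∀ v : W, b u v = F v := by
    intro v
    rw [← hwapp v, ← coercive.continuousLinearEquivOfBilin_apply u v, hu,
      ContinuousLinearEquiv.apply_symm_apply]
  refine ⟨(u : H), ⟨u.2, fun v hv => ?_⟩, ?_⟩
  · exact hbu ⟨v, hv⟩
  · rintro u' ⟨hu'B, hu'⟩
    -- uniqueness
    have hu0 : ∀ v : H, B v = 0 → ⟪A ((u : H) - u'), A v⟫ = 0 := by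
      intro v hv
      have h1 : ⟪A (u : H), A v⟫ = f v := hbu ⟨v, hv⟩
      rw [map_sub, inner_sub_left, h1, hu' v hv, sub_self]
    have hmem : B ((u : H) - u') = 0 := by
      rw [map_sub, hu'B, (by exact u.2 : B (u : H) = 0), sub_zero]
    have hA0 : A ((u : H) - u') = 0 := by
      have := hu0 ((u : H) - u') hmem
      rwa [real_inner_self_eq_norm_sq, pow_eq_zero_iff (by norm_num), norm_eq_zero] at this
    have hle : c₁ * ‖(u : H) - u'‖ ≤ 0 := by
      have := hlow ((u : H) - u')
      rwa [hA0, hmem, norm_zero, norm_zero, add_zero] at this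
    have hn : ‖(u : H) - u'‖ = 0 := le_antisymm (le_of_mul_le_mul_left (by rwa [mul_zero]) hc₁) (norm_nonneg _)
    rw [norm_eq_zero, sub_eq_zero] at hn
    exact hn.symm
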